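/- Let d > 1, S_n = Z[y_0,…,y_n]/(y_i^d - 1), φ_n = (y_0 - 1)(y_1 - y_0)⋯(y_n - y_{n-1}), and u_n = Σ_{k=0}^{d-1} y_n^k. Consider the action of the cyclic group μ_d on the ideal S_n·φ_n in which a chosen generator acts as multiplication by y_n. Then the group of invariants of this action equals the ideal (S_{n-1}·φ_{n-1} ∩ S_{n-1}·(1 - y_{n-1}))·u_n, where S_{n-1} = Z[y_0,…,y_{n-1}]/(y_i^d - 1) is viewed inside S_n. -/

import Mathlib

set_option maxHeartbeats 1000000
set_option synthInstance.maxHeartbeats 200000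



/-- `S_n = ℤ[y_0,…,y_n]/(y_0^d - 1, …, y_n^d - 1)`, the group ring of `(μ_d)^{n+1}`. -/
abbrev Sring (d n : ℕ) : Type :=
  MvPolynomial (Fin (n + 1)) ℤ ⧸
    Ideal.span (Set.range fun i : Fin (n + 1) =>
      (MvPolynomial.X i : MvPolynomial (Fin (n + 1)) ℤ) ^ d - 1)

open Fin.NatCast in
/-- The class of the variable `y_i` in `S_n` (indices taken mod `n+1`). -/
noncomputable def yS (d n : ℕ) (i : ℕ) : Sring d n :=
  Ideal.Quotient.mk _ (MvPolynomial.X (i : Fin (n + 1)))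

/-- `φ_m = (y_0 - 1)(y_1 - y_0)⋯(y_m - y_{m-1})`, for `m ≤ n`, in `S_n`. -/
noncomputable def phiS (d n m : ℕ) : Sring d n :=
  (yS d n 0 - 1) * ∏ i ∈ Finset.range m, (yS d n (i + 1) - yS d n i)

/-- The norm element `u_n = 1 + y_n + ⋯ + y_n^{d-1}` in `S_n`. -/
noncomputable def uS (d n : ℕ) : Sring d n :=
  ∑ k ∈ Finset.range d, yS d n n ^ k


open Polynomial Finset
open Fin.NatCast

noncomputable section

namespace Stmt13Aux

variable {R : Type} [CommRing R]

/-- geometric sum `1 + X + ... + X^(d-1)` -/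
def uP (R : Type) [CommRing R] (d : ℕ) : R[X] := ∑ i ∈ Finset.range d, X ^ i

def qP (R : Type) [CommRing R] (d : ℕ) : R[X] := X ^ d - 1

abbrev QP (R : Type) [CommRing R] (d : ℕ) : Type := R[X] ⧸ Ideal.span {qP R d}

def mkP (R : Type) [CommRing R] (d : ℕ) : R[X] →+* QP R d :=
  Ideal.Quotient.mk (Ideal.span {qP R d})

lemma uP_mul (d : ℕ) : uP R d * (X - 1) = qP R d := by
  rw [uP, qP]; exact geom_sum_mul X d

lemma monic_uP {d : ℕ} (hd : d ≠ 0) : (uP R d).Monic := by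
  rw [uP]; exact monic_geom_sum_X hd

lemma monic_qP {d : ℕ} (hd : 0 < d) : (qP R d).Monic := by
  have := monic_X_pow_sub_C (1 : R) hd.ne'
  simpa [qP] using this

lemma mkP_qP (d : ℕ) : mkP R d (qP R d) = 0 :=
  Ideal.Quotient.eq_zero_iff_mem.2 (Ideal.subset_span (Set.mem_singleton _))

lemma coeff_uP_zero {d : ℕ} (hd : 0 < d) : (uP R d).coeff 0 = 1 := by
  rw [uP, finset_sum_coeff]
  rw [Finset.sum_congr rfl (fun i _ => coeff_X_pow i 0)]
  rw [Finset.sum_ite_eq (Finset.range d) 0 (fun _ => (1:R))]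
  simp [Finset.mem_range, hd]

lemma degree_uP_lt {d : ℕ} (hd : 0 < d) : (uP R d).degree < (d : ℕ) := by
  rw [uP]
  refine lt_of_le_of_lt (degree_sum_le _ _) ?_
  rw [Finset.sup_lt_iff (by exact_mod_cast WithBot.bot_lt_coe d)]
  intro i hi
  calc (X ^ i : R[X]).degree ≤ i := degree_X_pow_le i
  _ < (d : ℕ) := by exact_mod_cast Finset.mem_range.1 hi

/-- P1: annihilator of `X - 1` is generated by `u`. -/
lemma P1 {d : ℕ} (z : QP R d) (h : (mkP R d X - 1) * z = 0) :
    ∃ t, z = t * mkP R d (uP R d) := by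
  obtain ⟨f, rfl⟩ := Ideal.Quotient.mk_surjective z
  have h1 : mkP R d ((X - 1) * f) = 0 := by
    rw [map_mul, map_sub, map_one]; exact h
  have h2 : qP R d ∣ (X - 1) * f := by
    rw [← Ideal.mem_span_singleton]
    exact Ideal.Quotient.eq_zero_iff_mem.1 h1
  obtain ⟨g, hg⟩ := h2
  have h3 : (X - C (1:R)) * (f - uP R d * g) = 0 := by
    have := uP_mul (R := R) d
    rw [map_one]
    rw [mul_sub, hg, ← this]; ring
  have h4 : f - uP R d * g = 0 :=
    ((monic_X_sub_C (1:R)).mul_right_eq_zero_iff).1 h3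
  refine ⟨mkP R d g, ?_⟩
  have h5 : f = uP R d * g := by
    have := sub_eq_zero.1 h4; linear_combination this
  rw [h5, map_mul, mul_comm]; rfl

/-- P2: annihilator of `u` is generated by `X - 1`. -/
lemma P2 {d : ℕ} (hd : 0 < d) (z : QP R d) (h : mkP R d (uP R d) * z = 0) :
    ∃ t, z = t * (mkP R d X - 1) := by
  obtain ⟨f, rfl⟩ := Ideal.Quotient.mk_surjective z
  have h1 : mkP R d (uP R d * f) = 0 := by rw [map_mul]; exact h
  have h2 : qP R d ∣ uP R d * f := by
    rw [← Ideal.mem_span_singleton]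
    exact Ideal.Quotient.eq_zero_iff_mem.1 h1
  obtain ⟨g, hg⟩ := h2
  have h3 : uP R d * (f - (X - 1) * g) = 0 := by
    rw [mul_sub, hg, ← uP_mul d]; ring
  have h4 : f - (X - 1) * g = 0 := ((monic_uP hd.ne').mul_right_eq_zero_iff).1 h3
  have h5 : f = (X - 1) * g := by
    have := sub_eq_zero.1 h4; linear_combination this
  refine ⟨mkP R d g, ?_⟩
  rw [h5]
  show mkP R d ((X-1) * g) = _
  rw [map_mul, map_sub, map_one, mul_comm]

/-- P3: extracting the "constant coefficient" divisibility. -/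
lemma P3 {d : ℕ} (hd : 0 < d) (c φ : R) (z : QP R d)
    (h : mkP R d (C c) * mkP R d (uP R d) = mkP R d (C φ) * z) :
    ∃ r : R, c = φ * r := by
  rcases subsingleton_or_nontrivial R with hs | hnt
  · exact ⟨0, Subsingleton.elim _ _⟩
  obtain ⟨w, rfl⟩ := Ideal.Quotient.mk_surjective z
  have h' : mkP R d (C c) * mkP R d (uP R d) = mkP R d (C φ) * mkP R d w := h
  have h1 : mkP R d (C c * uP R d - C φ * w) = 0 := by
    rw [map_sub, map_mul, map_mul, ← h', sub_self]
  have h2 : qP R d ∣ C c * uP R d - C φ * w := by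
    rw [← Ideal.mem_span_singleton]
    exact Ideal.Quotient.eq_zero_iff_mem.1 h1
  have h3 : qP R d ∣ C c * uP R d - C φ * (w %ₘ qP R d) := by
    obtain ⟨g, hg⟩ := h2
    refine ⟨g + C φ * (w /ₘ qP R d), ?_⟩
    linear_combination hg - C φ * modByMonic_add_div w (qP R d)
  have hdegq : (qP R d).degree = (d : ℕ) := by
    have := degree_X_pow_sub_C hd (1 : R)
    simpa [qP] using this
  have hdeg : (C c * uP R d - C φ * (w %ₘ qP R d)).degree < (qP R d).degree := by
    rw [hdegq]
    have hCmul : ∀ (a : R) (p : R[X]), (C a * p).degree ≤ p.degree := fun a p => by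
      rw [← smul_eq_C_mul]; exact degree_smul_le a p
    refine lt_of_le_of_lt (degree_sub_le _ _) (max_lt ?_ ?_)
    · exact lt_of_le_of_lt (hCmul _ _) (degree_uP_lt hd)
    · refine lt_of_le_of_lt (hCmul _ _) ?_
      rw [← hdegq]; exact degree_modByMonic_lt w (monic_qP hd)
  have h4 : C c * uP R d - C φ * (w %ₘ qP R d) = 0 := by
    have hz := (modByMonic_eq_zero_iff_dvd (monic_qP (R := R) hd)).2 h3
    have he := (modByMonic_eq_self_iff (monic_qP (R := R) hd)).2 hdeg
    rw [he] at hz; exact hz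
  have h5 : C c * uP R d = C φ * (w %ₘ qP R d) := sub_eq_zero.1 h4
  refine ⟨(w %ₘ qP R d).coeff 0, ?_⟩
  have := congrArg (fun p => Polynomial.coeff p 0) h5
  simpa [coeff_C_mul, coeff_uP_zero hd] using this

/-- P4: modulo `span {q}`, `z * u` only depends on the augmentation of `z`. -/
lemma P4 {d : ℕ} (z : QP R d) :
    ∃ c : R, z * mkP R d (uP R d) = mkP R d (C c) * mkP R d (uP R d) := by
  obtain ⟨f, rfl⟩ := Ideal.Quotient.mk_surjective z
  refine ⟨f.eval 1, ?_⟩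
  obtain ⟨h, hh⟩ := X_sub_C_dvd_sub_C_eval (a := (1:R)) (p := f)
  have key : f * uP R d = C (f.eval 1) * uP R d + h * qP R d := by
    rw [C_1] at hh
    linear_combination uP R d * hh + h * uP_mul (R := R) d
  show mkP R d f * mkP R d (uP R d) = _
  rw [← map_mul, key, map_add, map_mul, map_mul, mkP_qP, mul_zero, add_zero]

/-- evaluation at an element `y` with `y ^ d = 1`. -/
def evQ (d : ℕ) (y : R) (hy : y ^ d = 1) : QP R d →+* R :=
  Ideal.Quotient.lift _ (evalRingHom y) (by
    intro a ha
    rw [Ideal.mem_span_singleton] at ha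
    obtain ⟨g, rfl⟩ := ha
    simp [qP, hy])

lemma evQ_mkP {d : ℕ} (y : R) (hy : y ^ d = 1) (f : R[X]) :
    evQ d y hy (mkP R d f) = f.eval y :=
  Ideal.Quotient.lift_mk _ _ _

lemma eval_uP {d : ℕ} (y : R) : (uP R d).eval y = ∑ i ∈ Finset.range d, y ^ i := by
  rw [uP, eval_finset_sum]; simp

lemma evQ_uP {d : ℕ} (y : R) (hy : y ^ d = 1) :
    evQ d y hy (mkP R d (uP R d)) = ∑ i ∈ Finset.range d, y ^ i := by
  rw [evQ_mkP, uP, eval_finset_sum]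
  simp

/-! ### The tower `Bq d (m+1)` over `Bq d m` -/

abbrev IB (d m : ℕ) : Ideal (MvPolynomial (Fin m) ℤ) :=
  Ideal.span (Set.range fun i : Fin m => (MvPolynomial.X i : MvPolynomial (Fin m) ℤ) ^ d - 1)

abbrev Bq (d m : ℕ) : Type := MvPolynomial (Fin m) ℤ ⧸ IB d m

def yB (d m : ℕ) (i : Fin m) : Bq d m := Ideal.Quotient.mk _ (MvPolynomial.X i)

lemma yB_pow (d m : ℕ) (i : Fin m) : yB d m i ^ d = 1 := by
  have h : Ideal.Quotient.mk (IB d m) ((MvPolynomial.X i : MvPolynomial (Fin m) ℤ) ^ d - 1) = 0 :=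
    Ideal.Quotient.eq_zero_iff_mem.2 (Ideal.subset_span ⟨i, rfl⟩)
  have h2 : yB d m i ^ d - 1 = 0 := by
    rw [yB, ← map_pow, ← map_one (Ideal.Quotient.mk (IB d m)), ← map_sub]; exact h
  linear_combination h2

variable (d m : ℕ)

def vmap : Fin (m + 1) → QP (Bq d m) d :=
  fun i => Fin.lastCases (mkP (Bq d m) d X) (fun j => mkP (Bq d m) d (C (yB d m j))) i

def Fhat : MvPolynomial (Fin (m + 1)) ℤ →+* QP (Bq d m) d :=
  MvPolynomial.eval₂Hom (Int.castRingHom _) (vmap d m)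

lemma Fhat_X (i : Fin (m + 1)) : Fhat d m (MvPolynomial.X i) = vmap d m i :=
  MvPolynomial.eval₂Hom_X' _ _ _

lemma Fhat_vanish : ∀ a ∈ IB d (m + 1), Fhat d m a = 0 := by
  intro a ha
  refine (?_ : IB d (m+1) ≤ RingHom.ker (Fhat d m)) ha
  rw [Ideal.span_le]
  rintro _ ⟨i, rfl⟩
  rw [SetLike.mem_coe, RingHom.mem_ker, map_sub, map_pow, map_one, Fhat_X]
  cases i using Fin.lastCases with
  | last =>
    rw [vmap, Fin.lastCases_last, ← map_pow]
    have h : mkP (Bq d m) d (X ^ d) - 1 = mkP (Bq d m) d (qP (Bq d m) d) := by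
      simp only [qP, map_sub, map_one]
    rw [h, mkP_qP]
  | cast j =>
    rw [vmap, Fin.lastCases_castSucc, ← map_pow, ← Polynomial.C_pow, yB_pow]
    rw [Polynomial.C_1, map_one, sub_self]

def FQ : Bq d (m + 1) →+* QP (Bq d m) d :=
  Ideal.Quotient.lift (IB d (m + 1)) (Fhat d m) (Fhat_vanish d m)

lemma FQ_mk (f : MvPolynomial (Fin (m + 1)) ℤ) :
    FQ d m (Ideal.Quotient.mk (IB d (m + 1)) f) = Fhat d m f :=
  Ideal.Quotient.lift_mk _ _ _

lemma FQ_yB_last : FQ d m (yB d (m + 1) (Fin.last m)) = mkP (Bq d m) d X := by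
  rw [yB, FQ_mk, Fhat_X, vmap, Fin.lastCases_last]

lemma FQ_yB_cast (j : Fin m) :
    FQ d m (yB d (m + 1) j.castSucc) = mkP (Bq d m) d (C (yB d m j)) := by
  rw [yB, FQ_mk, Fhat_X, vmap, Fin.lastCases_castSucc]

def bhat : MvPolynomial (Fin m) ℤ →+* Bq d (m + 1) :=
  MvPolynomial.eval₂Hom (Int.castRingHom _) (fun j => yB d (m + 1) j.castSucc)

lemma bhat_X (j : Fin m) : bhat d m (MvPolynomial.X j) = yB d (m + 1) j.castSucc :=
  MvPolynomial.eval₂Hom_X' _ _ _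

lemma bhat_vanish : ∀ a ∈ IB d m, bhat d m a = 0 := by
  intro a ha
  refine (?_ : IB d m ≤ RingHom.ker (bhat d m)) ha
  rw [Ideal.span_le]
  rintro _ ⟨j, rfl⟩
  rw [SetLike.mem_coe, RingHom.mem_ker, map_sub, map_pow, map_one, bhat_X, yB_pow, sub_self]

def baseQ : Bq d m →+* Bq d (m + 1) :=
  Ideal.Quotient.lift (IB d m) (bhat d m) (bhat_vanish d m)

lemma baseQ_mk (f : MvPolynomial (Fin m) ℤ) :
    baseQ d m (Ideal.Quotient.mk (IB d m) f) = bhat d m f :=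
  Ideal.Quotient.lift_mk _ _ _

lemma baseQ_yB (j : Fin m) : baseQ d m (yB d m j) = yB d (m + 1) j.castSucc := by
  rw [yB, baseQ_mk, bhat_X]

def ghat : (Bq d m)[X] →+* Bq d (m + 1) :=
  Polynomial.eval₂RingHom (baseQ d m) (yB d (m + 1) (Fin.last m))

lemma ghat_X : ghat d m X = yB d (m + 1) (Fin.last m) := Polynomial.eval₂_X _ _

lemma ghat_C (b : Bq d m) : ghat d m (C b) = baseQ d m b := Polynomial.eval₂_C _ _

lemma ghat_vanish : ∀ a ∈ Ideal.span {qP (Bq d m) d}, ghat d m a = 0 := by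
  intro a ha
  rw [Ideal.mem_span_singleton] at ha
  obtain ⟨g, rfl⟩ := ha
  rw [map_mul, qP, map_sub, map_pow, map_one, ghat_X, yB_pow, sub_self, zero_mul]

def GQ : QP (Bq d m) d →+* Bq d (m + 1) :=
  Ideal.Quotient.lift _ (ghat d m) (ghat_vanish d m)

lemma GQ_mkP (p : (Bq d m)[X]) : GQ d m (mkP (Bq d m) d p) = ghat d m p :=
  Ideal.Quotient.lift_mk _ _ _

lemma GQ_X : GQ d m (mkP (Bq d m) d X) = yB d (m + 1) (Fin.last m) := by
  rw [GQ_mkP, ghat_X]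

lemma GQ_C (b : Bq d m) : GQ d m (mkP (Bq d m) d (C b)) = baseQ d m b := by
  rw [GQ_mkP, ghat_C]

lemma GQ_FQ (a : Bq d (m + 1)) : GQ d m (FQ d m a) = a := by
  obtain ⟨f, rfl⟩ := Ideal.Quotient.mk_surjective a
  have key : (GQ d m).comp (Fhat d m) = Ideal.Quotient.mk (IB d (m + 1)) := by
    apply MvPolynomial.ringHom_ext
    · intro r
      exact RingHom.congr_fun (Subsingleton.elim
        (((GQ d m).comp (Fhat d m)).comp (MvPolynomial.C)
          : ℤ →+* Bq d (m + 1))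
        ((Ideal.Quotient.mk (IB d (m + 1))).comp (MvPolynomial.C))) r
    · intro i
      rw [RingHom.comp_apply, Fhat_X]
      cases i using Fin.lastCases with
      | last => rw [vmap, Fin.lastCases_last, GQ_X]; rfl
      | cast j => rw [vmap, Fin.lastCases_castSucc, GQ_C, baseQ_yB]; rfl
  calc GQ d m (FQ d m (Ideal.Quotient.mk (IB d (m+1)) f))
      = ((GQ d m).comp (Fhat d m)) f := by rw [FQ_mk]; rfl
    _ = Ideal.Quotient.mk (IB d (m + 1)) f := by rw [key]

lemma FQ_baseQ (b : Bq d m) : FQ d m (baseQ d m b) = mkP (Bq d m) d (C b) := by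
  obtain ⟨g, rfl⟩ := Ideal.Quotient.mk_surjective b
  have key : (FQ d m).comp (bhat d m)
      = ((mkP (Bq d m) d).comp (Polynomial.C)).comp (Ideal.Quotient.mk (IB d m)) := by
    apply MvPolynomial.ringHom_ext
    · intro r
      exact RingHom.congr_fun (Subsingleton.elim
        (((FQ d m).comp (bhat d m)).comp (MvPolynomial.C) : ℤ →+* QP (Bq d m) d)
        ((((mkP (Bq d m) d).comp (Polynomial.C)).comp
          (Ideal.Quotient.mk (IB d m))).comp (MvPolynomial.C))) r
    · intro j
      rw [RingHom.comp_apply, bhat_X, FQ_yB_cast]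
      rfl
  rw [baseQ_mk]
  exact RingHom.congr_fun key g

lemma FQ_GQ (z : QP (Bq d m) d) : FQ d m (GQ d m z) = z := by
  obtain ⟨p, rfl⟩ := Ideal.Quotient.mk_surjective z
  have key : (FQ d m).comp (ghat d m) = mkP (Bq d m) d := by
    apply Polynomial.ringHom_ext
    · intro b
      rw [RingHom.comp_apply, ghat_C, FQ_baseQ]
    · rw [RingHom.comp_apply, ghat_X, FQ_yB_last]
  calc FQ d m (GQ d m (mkP (Bq d m) d p)) = ((FQ d m).comp (ghat d m)) p := by
        rw [GQ_mkP]; rfl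
    _ = mkP (Bq d m) d p := by rw [key]

/-! ### index bookkeeping -/

lemma cast_last (N : ℕ) : ((N : ℕ) : Fin (N + 1)) = Fin.last N := by
  ext
  rw [Fin.val_natCast, Nat.mod_eq_of_lt (by omega), Fin.val_last]

lemma cast_lt {N i : ℕ} [NeZero N] (h : i < N) :
    ((i : ℕ) : Fin (N + 1)) = Fin.castSucc ((i : ℕ) : Fin N) := by
  ext
  rw [Fin.val_natCast, Fin.coe_castSucc, Fin.val_natCast,
    Nat.mod_eq_of_lt (by omega), Nat.mod_eq_of_lt (by omega)]

/-! ### relating `yS`, `phiS`, `uS` to the tower -/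

lemma yS_eq (d N i : ℕ) : yS d N i = yB d (N + 1) ((i : ℕ) : Fin (N + 1)) := rfl

def phiB (d n' : ℕ) : Bq d (n' + 1) :=
  (yB d (n' + 1) ((0 : ℕ) : Fin (n' + 1)) - 1) *
    ∏ i ∈ Finset.range n',
      (yB d (n' + 1) ((i + 1 : ℕ) : Fin (n' + 1)) - yB d (n' + 1) ((i : ℕ) : Fin (n' + 1)))

lemma FQ_yS_lt (d : ℕ) {N i : ℕ} [NeZero N] (h : i < N) :
    FQ d N (yS d N i) = mkP (Bq d N) d (C (yB d N ((i : ℕ) : Fin N))) := by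
  rw [yS_eq, cast_lt h, FQ_yB_cast]

lemma FQ_yS_last (d N : ℕ) : FQ d N (yS d N N) = mkP (Bq d N) d X := by
  rw [yS_eq, cast_last, FQ_yB_last]

lemma FQ_phiS (d n' : ℕ) :
    FQ d (n' + 1) (phiS d (n' + 1) n') = mkP (Bq d (n' + 1)) d (C (phiB d n')) := by
  rw [phiS, phiB]
  simp only [map_mul, map_sub, map_one, map_prod]
  congr 1
  · rw [FQ_yS_lt d (by omega : (0:ℕ) < n' + 1)]
  · refine Finset.prod_congr rfl fun i hi => ?_
    have hi' : i < n' := Finset.mem_range.1 hi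
    rw [FQ_yS_lt d (by omega : i + 1 < n' + 1), FQ_yS_lt d (by omega : i < n' + 1)]

lemma baseQ_yS (d : ℕ) {N i : ℕ} [NeZero N] (h : i < N) :
    baseQ d N (yB d N ((i : ℕ) : Fin N)) = yS d N i := by
  rw [baseQ_yB, yS_eq, cast_lt h]

lemma baseQ_phiB (d n' : ℕ) : baseQ d (n' + 1) (phiB d n') = phiS d (n' + 1) n' := by
  rw [phiB, phiS]
  simp only [map_mul, map_sub, map_one, map_prod]
  congr 1
  · rw [baseQ_yS d (by omega : (0:ℕ) < n' + 1)]
  · refine Finset.prod_congr rfl fun i hi => ?_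
    have hi' : i < n' := Finset.mem_range.1 hi
    rw [baseQ_yS d (by omega : i + 1 < n' + 1), baseQ_yS d (by omega : i < n' + 1)]

lemma phiS_succ (d n' : ℕ) :
    phiS d (n' + 1) (n' + 1)
      = phiS d (n' + 1) n' * (yS d (n' + 1) (n' + 1) - yS d (n' + 1) n') := by
  rw [phiS, phiS, Finset.prod_range_succ, mul_assoc]

lemma GQ_uP (d N : ℕ) : GQ d N (mkP (Bq d N) d (uP (Bq d N) d)) = uS d N := by
  rw [GQ_mkP, uP, uS, map_sum]
  refine Finset.sum_congr rfl fun k _ => ?_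
  rw [map_pow, ghat_X, yS_eq, cast_last]

lemma yS_pow (d N i : ℕ) : yS d N i ^ d = 1 := by
  rw [yS_eq]; exact yB_pow d (N + 1) _

end Stmt13Aux

open Stmt13Aux in
/-- The group of invariants of the `μ_d`-action on the ideal `S_n·φ_n` (a chosen
generator acting as multiplication by `y_n`) equals the ideal
`(S_{n-1}·φ_{n-1} ∩ S_{n-1}·(1 - y_{n-1}))·u_n`. -/
theorem stmt13 (d n : ℕ) (hd : 1 < d) (hn : 1 ≤ n) :
    ∀ a : Sring d n,
      (a ∈ Ideal.span {phiS d n n} ∧ yS d n n * a = a) ↔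
        ∃ b ∈ Ideal.span {phiS d n (n - 1)} ⊓ Ideal.span {1 - yS d n (n - 1)},
          a = b * uS d n := by
  obtain ⟨n', rfl⟩ : ∃ n', n = n' + 1 := ⟨n - 1, by omega⟩
  have hd0 : 0 < d := by omega
  intro a
  simp only [Nat.add_sub_cancel]
  constructor
  · rintro ⟨haφ, hinv⟩
    rw [Ideal.mem_span_singleton] at haφ
    obtain ⟨s, hs⟩ := haφ
    have h1 : (mkP (Bq d (n' + 1)) d X - 1) * FQ d (n' + 1) a = 0 := by
      have h := congrArg (FQ d (n' + 1)) hinv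
      rw [map_mul, FQ_yS_last] at h
      linear_combination h
    obtain ⟨t, ht⟩ := P1 _ h1
    obtain ⟨c, hc⟩ := P4 t
    have hA : FQ d (n' + 1) a
        = mkP (Bq d (n' + 1)) d (C c) * mkP (Bq d (n' + 1)) d (uP (Bq d (n' + 1)) d) := by
      rw [ht, hc]
    set y' : Bq d (n' + 1) := yB d (n' + 1) ((n' : ℕ) : Fin (n' + 1)) with hy'
    have heq : mkP (Bq d (n' + 1)) d (C c) * mkP (Bq d (n' + 1)) d (uP (Bq d (n' + 1)) d)
        = mkP (Bq d (n' + 1)) d (C (phiB d n'))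
          * ((mkP (Bq d (n' + 1)) d X - mkP (Bq d (n' + 1)) d (C y'))
              * FQ d (n' + 1) s) := by
      rw [← hA, hs, map_mul, phiS_succ, map_mul, FQ_phiS, map_sub, FQ_yS_last,
        FQ_yS_lt d (by omega : n' < n' + 1)]
      ring
    obtain ⟨r, hr⟩ := P3 hd0 c (phiB d n') _ heq
    have hy'd : y' ^ d = 1 := yB_pow d (n' + 1) _
    have hann : c * ∑ i ∈ Finset.range d, y' ^ i = 0 := by
      have h := congrArg (evQ d y' hy'd) heq
      simp only [map_mul, map_sub, evQ_mkP, eval_C, eval_X, eval_uP,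
        sub_self, zero_mul, mul_zero] at h
      exact h
    have h2 : mkP (Bq d n') d (uP (Bq d n') d) * FQ d n' c = 0 := by
      have h := congrArg (FQ d n') hann
      rw [map_mul, map_zero, map_sum] at h
      have hyX : FQ d n' y' = mkP (Bq d n') d X := by
        rw [hy', cast_last, FQ_yB_last]
      have hsum : ∑ i ∈ Finset.range d, FQ d n' (y' ^ i)
          = mkP (Bq d n') d (uP (Bq d n') d) := by
        rw [uP, map_sum]
        exact Finset.sum_congr rfl fun i _ => by rw [map_pow, hyX, map_pow]
      rw [hsum] at h
      linear_combination h
    obtain ⟨t₂, ht₂⟩ := P2 hd0 (FQ d n' c) h2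
    have hc2 : c = GQ d n' t₂ * (y' - 1) := by
      have h := congrArg (GQ d n') ht₂
      rw [GQ_FQ, map_mul, map_sub, map_one, GQ_X, ← cast_last, ← hy'] at h
      exact h
    refine ⟨baseQ d (n' + 1) c, ?_, ?_⟩
    · rw [Submodule.mem_inf]
      constructor
      · rw [Ideal.mem_span_singleton]
        exact ⟨baseQ d (n' + 1) r, by rw [hr, map_mul, baseQ_phiB]⟩
      · rw [Ideal.mem_span_singleton]
        refine ⟨-(baseQ d (n' + 1) (GQ d n' t₂)), ?_⟩
        have hby : baseQ d (n' + 1) y' = yS d (n' + 1) n' :=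
          baseQ_yS d (by omega : n' < n' + 1)
        rw [hc2, map_mul, map_sub, map_one, hby]
        ring
    · have hback : a = GQ d (n' + 1) (FQ d (n' + 1) a) := (GQ_FQ _ _ a).symm
      rw [hback, hA, map_mul, GQ_C, GQ_uP]
  · rintro ⟨b, hb, rfl⟩
    rw [Submodule.mem_inf] at hb
    obtain ⟨hb1, hb2⟩ := hb
    rw [Ideal.mem_span_singleton] at hb1 hb2
    obtain ⟨p, hp⟩ := hb1
    obtain ⟨q, hq⟩ := hb2
    have hxd : yS d (n' + 1) (n' + 1) ^ d = 1 := yS_pow d (n' + 1) (n' + 1)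
    have hyd : yS d (n' + 1) n' ^ d = 1 := yS_pow d (n' + 1) n'
    constructor
    · rw [Ideal.mem_span_singleton]
      set x := yS d (n' + 1) (n' + 1) with hx
      set y := yS d (n' + 1) n' with hy
      set T := ∑ m ∈ Finset.range d, ∑ i ∈ Finset.range m, x ^ i * y ^ (m - 1 - i) with hT
      refine ⟨p * T, ?_⟩
      have hTm : T * (x - y) = uS d (n' + 1) - ∑ m ∈ Finset.range d, y ^ m := by
        rw [hT, Finset.sum_mul,
          Finset.sum_congr rfl (fun m _ => geom_sum₂_mul x y m),
          Finset.sum_sub_distrib, uS]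
      have hbu : b * ∑ m ∈ Finset.range d, y ^ m = 0 := by
        have h0 : (∑ m ∈ Finset.range d, y ^ m) * (y - 1) = 0 := by
          rw [geom_sum_mul, hyd, sub_self]
        linear_combination (∑ m ∈ Finset.range d, y ^ m) * hq - q * h0
      rw [phiS_succ]
      have e1 : phiS d (n' + 1) n' * (x - y) * (p * T)
          = phiS d (n' + 1) n' * p * (T * (x - y)) := by ring
      rw [e1, ← hp, hTm, mul_sub, hbu, sub_zero]
    · have h0 : uS d (n' + 1) * (yS d (n' + 1) (n' + 1) - 1) = 0 := by
        rw [uS, geom_sum_mul, hxd, sub_self]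
      linear_combination b * h0
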